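/- Every homogeneous element of I_Mac of degree s ≤ n is zero; that is, I_Mac ∩ E^s = 0 for all 0 ≤ s ≤ n. In particular, the quotient ring E/I_Mac is torsion-free in degrees 0 ≤ s ≤ n. -/

import Mathlib

noncomputable section

open Polynomial

/-- The free graded-commutative ring `E = Λ_ℤ⟨x₁,…,x_g,x'₁,…,x'_g⟩ ⊗ ℤ[y]`,
realized as the exterior algebra over `ℤ[y]` on a free module of rank `2g`. -/
abbrev E (g : ℕ) : Type :=
  ExteriorAlgebra (Polynomial ℤ) ((Fin g ⊕ Fin g) → Polynomial ℤ)

/-- The degree-one generator `x_i`. -/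
def x (g : ℕ) (i : Fin g) : E g :=
  ExteriorAlgebra.ι (Polynomial ℤ) (Pi.single (Sum.inl i) 1)

/-- The degree-one generator `x'_i`. -/
def x' (g : ℕ) (i : Fin g) : E g :=
  ExteriorAlgebra.ι (Polynomial ℤ) (Pi.single (Sum.inr i) 1)

/-- The degree-two polynomial generator `y`. -/
def y (g : ℕ) : E g :=
  algebraMap (Polynomial ℤ) (E g) Polynomial.X

/-- The Macdonald relation `x_{i₁}⋯x_{i_a}·x'_{j₁}⋯x'_{j_b}·(y−x_{k₁}x'_{k₁})⋯(y−x_{k_c}x'_{k_c})·y^q`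
associated to lists of indices `I, J, K` and `q : ℕ`. -/
def macRel (g : ℕ) (I J K : List (Fin g)) (q : ℕ) : E g :=
  (I.map (x g)).prod * (J.map (x' g)).prod *
    (K.map (fun k => y g - x g k * x' g k)).prod * (y g) ^ q

/-- The two-sided ideal `I_Mac` generated by all Macdonald relations of weight `n+1`. -/
def IMac (g n : ℕ) : TwoSidedIdeal (E g) :=
  TwoSidedIdeal.span {z : E g | ∃ (I J K : List (Fin g)) (q : ℕ),
    (I ++ J ++ K).Nodup ∧ I.length + J.length + 2 * K.length + q = n + 1 ∧
    z = macRel g I J K q}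

/-- The monomial `x_A x'_B y^q`. -/
def emonomial (g : ℕ) (A B : Finset (Fin g)) (q : ℕ) : E g :=
  ((A.sort (· ≤ ·)).map (x g)).prod * ((B.sort (· ≤ ·)).map (x' g)).prod * (y g) ^ q

/-- The degree-`s` homogeneous component `E^s`, the ℤ-span of the monomials of degree `s`. -/
def Ecomp (g s : ℕ) : Submodule ℤ (E g) :=
  Submodule.span ℤ {z : E g | ∃ (A B : Finset (Fin g)) (q : ℕ),
    A.card + B.card + 2 * q = s ∧ z = emonomial g A B q}



/-! ### Auxiliary Fock-space machinery -/

abbrev Jg (g : ℕ) := Fin g ⊕ Fin g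
abbrev Fock (g : ℕ) := Finset (Jg g) →₀ Polynomial ℤ

def idx {g : ℕ} : Jg g → ℕ := Sum.elim (fun a => (a : ℕ)) (fun b => g + (b : ℕ))

lemma idx_injective {g : ℕ} : Function.Injective (idx (g := g)) := by
  rintro (a | a) (b | b) h <;> simp [idx] at h <;> first | (exact congrArg _ (Fin.ext h)) | omega
  
def cnt {g : ℕ} (i : Jg g) (S : Finset (Jg g)) : ℕ :=
  (S.filter (fun j => idx j < idx i)).card

def creaFun {g : ℕ} (i : Jg g) (φ : Fock g) (T : Finset (Jg g)) : Polynomial ℤ :=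
  if i ∈ T then ((-1 : ℤ) ^ cnt i (T.erase i)) • φ (T.erase i) else 0

/-- The creation operator. -/
def crea {g : ℕ} (i : Jg g) : Fock g →ₗ[Polynomial ℤ] Fock g where
  toFun φ := Finsupp.onFinset (φ.support.image (insert i)) (creaFun i φ)
    (by
      intro T hT
      unfold creaFun at hT
      split_ifs at hT with h
      · simp only [Finset.mem_image, Finsupp.mem_support_iff]
        refine ⟨T.erase i, fun h0 => hT ?_, Finset.insert_erase h⟩
        rw [h0, smul_zero]
      · simp at hT)
  map_add' φ ψ := by
    ext T
    simp only [Finsupp.onFinset_apply, Finsupp.add_apply, creaFun]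
    split_ifs <;> simp [smul_add]
  map_smul' r φ := by
    ext T
    simp only [Finsupp.onFinset_apply, Finsupp.smul_apply, RingHom.id_apply, creaFun]
    split_ifs <;> simp <;> ring

lemma crea_apply {g : ℕ} (i : Jg g) (φ : Fock g) (T : Finset (Jg g)) :
    crea i φ T = if i ∈ T then ((-1 : ℤ) ^ cnt i (T.erase i)) • φ (T.erase i) else 0 := rfl

lemma cnt_insert {g : ℕ} (i j : Jg g) (S : Finset (Jg g)) (hj : j ∉ S) :
    cnt i (insert j S) = cnt i S + if idx j < idx i then 1 else 0 := by
  unfold cnt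
  rw [Finset.filter_insert]
  split_ifs with h
  · rw [Finset.card_insert_of_notMem (fun hc => hj (Finset.mem_of_mem_filter _ hc))]
  · simp

lemma crea_sq {g : ℕ} (i : Jg g) : (crea i) ∘ₗ (crea i) = 0 := by
  refine LinearMap.ext fun φ => Finsupp.ext fun T => ?_
  simp only [LinearMap.comp_apply, LinearMap.zero_apply, Finsupp.coe_zero, Pi.zero_apply,
    crea_apply]
  split_ifs with h h2
  · exact absurd h2 (Finset.notMem_erase i T)
  · rw [smul_zero]
  · rfl

lemma crea_anticomm {g : ℕ} (i j : Jg g) :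
    (crea i) ∘ₗ (crea j) = -((crea j) ∘ₗ (crea i)) := by
  rcases eq_or_ne i j with rfl | hij
  · rw [crea_sq]; exact (neg_zero (G := Fock g →ₗ[Polynomial ℤ] Fock g)).symm
  refine LinearMap.ext fun φ => Finsupp.ext fun T => ?_
  simp only [LinearMap.comp_apply, LinearMap.neg_apply, Finsupp.neg_apply, crea_apply]
  by_cases hi : i ∈ T
  · by_cases hj : j ∈ T
    · have hjei : j ∈ T.erase i := Finset.mem_erase.2 ⟨(Ne.symm hij), hj⟩
      have hiej : i ∈ T.erase j := Finset.mem_erase.2 ⟨hij, hi⟩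
      rw [if_pos hi, if_pos hj, if_pos hjei, if_pos hiej]
      set T' := (T.erase i).erase j with hT'
      have e2 : (T.erase j).erase i = T' := Finset.erase_right_comm
      have hiT' : i ∉ T' := fun hc => (Finset.notMem_erase i T) (Finset.mem_of_mem_erase hc)
      have hjT' : j ∉ T' := Finset.notMem_erase _ _
      have r1 : T.erase i = insert j T' := (Finset.insert_erase hjei).symm
      have r2 : T.erase j = insert i T' := by rw [← e2]; exact (Finset.insert_erase hiej).symm
      rw [e2, r1, r2, cnt_insert i j T' hjT', cnt_insert j i T' hiT']
      rw [smul_smul, smul_smul, ← neg_smul]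
      congr 1
      have hne : idx i ≠ idx j := fun hc => hij (idx_injective hc)
      rcases lt_or_gt_of_ne hne with hlt | hlt
      · rw [if_neg (by omega), if_pos hlt]
        ring
      · rw [if_pos hlt, if_neg (by omega)]
        ring
    · rw [if_pos hi, if_neg hj, if_neg (fun hc => hj (Finset.mem_of_mem_erase hc)),
        smul_zero, neg_zero]
  · by_cases hj : j ∈ T
    · rw [if_neg hi, if_pos hj, if_neg (fun hc => hi (Finset.mem_of_mem_erase hc)),
        smul_zero, neg_zero]
    · rw [if_neg hi, if_neg hj, neg_zero]

def fLin {g : ℕ} : ((Jg g) → Polynomial ℤ) →ₗ[Polynomial ℤ]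
    Module.End (Polynomial ℤ) (Fock g) where
  toFun v := ∑ i, v i • (crea i : Module.End (Polynomial ℤ) (Fock g))
  map_add' v w := by
    simp only [Pi.add_apply, add_smul, Finset.sum_add_distrib]
  map_smul' r v := by
    simp only [Pi.smul_apply, smul_eq_mul, RingHom.id_apply, Finset.smul_sum, smul_smul]

lemma crea_mul_anticomm {g : ℕ} (i j : Jg g) :
    (crea i : Module.End (Polynomial ℤ) (Fock g)) * crea j = -(crea j * crea i) := by
  have := crea_anticomm i j
  rwa [← Module.End.mul_eq_comp, ← Module.End.mul_eq_comp] at this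

lemma fLin_apply {g : ℕ} (v : (Jg g) → Polynomial ℤ) :
    fLin v = ∑ i, v i • (crea i : Module.End (Polynomial ℤ) (Fock g)) := rfl

lemma fLin_sq {g : ℕ} (v : (Jg g) → Polynomial ℤ) : fLin v * fLin v = 0 := by
  have expand : fLin v * fLin v
      = ∑ i, ∑ j, (v i * v j) • ((crea i : Module.End (Polynomial ℤ) (Fock g)) * crea j) := by
    rw [fLin_apply, Finset.sum_mul_sum]
    refine Finset.sum_congr rfl fun i _ => Finset.sum_congr rfl fun j _ => ?_
    rw [smul_mul_assoc, mul_smul_comm, smul_smul]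
  have anti : ∀ i j : Jg g, (v i * v j) • ((crea i : Module.End (Polynomial ℤ) (Fock g)) * crea j)
      = -((v j * v i) • ((crea j : Module.End (Polynomial ℤ) (Fock g)) * crea i)) := by
    intro i j
    rw [crea_mul_anticomm i j, mul_comm (v i) (v j)]
    exact smul_neg (v j * v i) ((crea j) * (crea i) : Module.End (Polynomial ℤ) (Fock g))
  refine LinearMap.ext fun φ => Finsupp.ext fun S => Polynomial.ext fun q => ?_
  rw [expand]
  set u : Jg g → Jg g → ℤ := fun i j =>
    ((((v i * v j) • ((crea i : Module.End (Polynomial ℤ) (Fock g)) * crea j)) φ) S).coeff q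
    with hu_def
  have happ : ((((∑ i, ∑ j, (v i * v j) •
        ((crea i : Module.End (Polynomial ℤ) (Fock g)) * crea j))) φ S)).coeff q
      = ∑ i, ∑ j, u i j := by
    rw [LinearMap.sum_apply, Finsupp.finset_sum_apply, Polynomial.finset_sum_coeff]
    refine Finset.sum_congr rfl fun i _ => ?_
    rw [LinearMap.sum_apply, Finsupp.finset_sum_apply, Polynomial.finset_sum_coeff]
  have hu : ∀ i j, u i j = -(u j i) := by
    intro i j
    rw [hu_def]
    simp only
    rw [anti i j, LinearMap.neg_apply, Finsupp.neg_apply, Polynomial.coeff_neg]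
  have hsum : (∑ i, ∑ j, u i j) = -(∑ i, ∑ j, u i j) := by
    calc (∑ i, ∑ j, u i j) = ∑ i, ∑ j, -(u j i) :=
          Finset.sum_congr rfl fun i _ => Finset.sum_congr rfl fun j _ => hu i j
    _ = -(∑ i, ∑ j, u j i) := by
          simp only [← Finset.sum_neg_distrib]
    _ = -(∑ i, ∑ j, u i j) := by rw [Finset.sum_comm]
  rw [happ]
  simp only [LinearMap.zero_apply, Finsupp.coe_zero, Pi.zero_apply, Polynomial.coeff_zero]
  omega

/-- The Fock representation of `E g`. -/
def rep {g : ℕ} : E g →ₐ[Polynomial ℤ] Module.End (Polynomial ℤ) (Fock g) :=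
  ExteriorAlgebra.lift (Polynomial ℤ) ⟨fLin, fLin_sq⟩

lemma rep_iota {g : ℕ} (v : (Jg g) → Polynomial ℤ) :
    rep (ExteriorAlgebra.ι (Polynomial ℤ) v) = fLin v :=
  ExteriorAlgebra.lift_ι_apply _ fLin fLin_sq v

lemma rep_x {g : ℕ} (i : Fin g) : rep (x g i) = crea (Sum.inl i) := by
  rw [x, rep_iota, fLin_apply, Finset.sum_eq_single (Sum.inl i)]
  · simp
  · intro b _ hb; rw [Pi.single_eq_of_ne hb, zero_smul]
  · intro h; exact absurd (Finset.mem_univ _) h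

lemma rep_x' {g : ℕ} (i : Fin g) : rep (x' g i) = crea (Sum.inr i) := by
  rw [x', rep_iota, fLin_apply, Finset.sum_eq_single (Sum.inr i)]
  · simp
  · intro b _ hb; rw [Pi.single_eq_of_ne hb, zero_smul]
  · intro h; exact absurd (Finset.mem_univ _) h

lemma rep_y_apply {g : ℕ} (φ : Fock g) : rep (y g) φ = (X : Polynomial ℤ) • φ := by
  rw [y, AlgHom.commutes, Module.algebraMap_end_apply]

/-- The degree filtration on the Fock space. -/
def FF (g m : ℕ) (φ : Fock g) : Prop :=
  ∀ S : Finset (Jg g), ∀ q : ℕ, S.card + 2 * q < m → (φ S).coeff q = 0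

lemma FF_mono {g m m' : ℕ} (h : m' ≤ m) {φ : Fock g} (hφ : FF g m φ) : FF g m' φ :=
  fun S q hq => hφ S q (lt_of_lt_of_le hq h)

lemma FF_zero {g m : ℕ} : FF g m (0 : Fock g) := by
  intro S q _; simp

lemma FF_top {g : ℕ} (φ : Fock g) : FF g 0 φ := fun _ _ hq => absurd hq (by omega)

lemma FF_add {g m : ℕ} {φ ψ : Fock g} (hφ : FF g m φ) (hψ : FF g m ψ) : FF g m (φ + ψ) := by
  intro S q hq
  rw [Finsupp.add_apply, Polynomial.coeff_add, hφ S q hq, hψ S q hq, add_zero]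

lemma FF_neg {g m : ℕ} {φ : Fock g} (hφ : FF g m φ) : FF g m (-φ) := by
  intro S q hq
  rw [Finsupp.neg_apply, Polynomial.coeff_neg, hφ S q hq, neg_zero]

lemma FF_sub {g m : ℕ} {φ ψ : Fock g} (hφ : FF g m φ) (hψ : FF g m ψ) : FF g m (φ - ψ) := by
  rw [sub_eq_add_neg]; exact FF_add hφ (FF_neg hψ)

lemma FF_smul {g m : ℕ} (r : Polynomial ℤ) {φ : Fock g} (hφ : FF g m φ) : FF g m (r • φ) := by
  intro S q hq
  rw [Finsupp.smul_apply, smul_eq_mul, Polynomial.coeff_mul]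
  refine Finset.sum_eq_zero fun p hp => ?_
  rw [Finset.HasAntidiagonal.mem_antidiagonal] at hp
  rw [hφ S p.2 (by omega), mul_zero]

lemma FF_zsmul {g m : ℕ} (c : ℤ) {φ : Fock g} (hφ : FF g m φ) : FF g m (c • φ) := by
  intro S q hq
  rw [Finsupp.smul_apply, Polynomial.coeff_smul, hφ S q hq, smul_zero]

lemma FF_X_smul {g m : ℕ} {φ : Fock g} (hφ : FF g m φ) :
    FF g (m + 2) ((X : Polynomial ℤ) • φ) := by
  intro S q hq
  rw [Finsupp.smul_apply, smul_eq_mul]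
  cases q with
  | zero => rw [Polynomial.mul_coeff_zero, Polynomial.coeff_X_zero, zero_mul]
  | succ q => rw [Polynomial.coeff_X_mul, hφ S q (by omega)]

lemma FF_crea {g m : ℕ} (i : Jg g) {φ : Fock g} (hφ : FF g m φ) : FF g (m + 1) (crea i φ) := by
  intro S q hq
  rw [crea_apply]
  split_ifs with h
  · have hc : (S.erase i).card + 2 * q < m := by
      have := Finset.card_erase_of_mem h
      have : 0 < S.card := Finset.card_pos.2 ⟨i, h⟩
      omega
    rw [Polynomial.coeff_smul, hφ (S.erase i) q hc, smul_zero]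
  · simp

lemma FF_sum {g m : ℕ} {α : Type*} (s : Finset α) (f : α → Fock g)
    (hf : ∀ a ∈ s, FF g m (f a)) : FF g m (∑ a ∈ s, f a) := by
  classical
  induction s using Finset.induction_on with
  | empty => simpa using FF_zero
  | insert _ _ hx ih =>
    rw [Finset.sum_insert hx]
    exact FF_add (hf _ (Finset.mem_insert_self _ _))
      (ih fun a ha => hf a (Finset.mem_insert_of_mem ha))

/-- Every operator in the image of `rep` preserves the filtration. -/
lemma rep_preserves {g : ℕ} (u : E g) :
    ∀ m : ℕ, ∀ φ : Fock g, FF g m φ → FF g m (rep u φ) := by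
  induction u using ExteriorAlgebra.induction with
  | algebraMap r =>
    intro m φ hφ
    rw [AlgHom.commutes, Module.algebraMap_end_apply]
    exact FF_smul r hφ
  | ι v =>
    intro m φ hφ
    rw [rep_iota, fLin_apply, LinearMap.sum_apply]
    refine FF_sum _ _ fun i _ => ?_
    rw [LinearMap.smul_apply]
    exact FF_smul _ (FF_mono (Nat.le_succ m) (FF_crea i hφ))
  | mul a b ha hb =>
    intro m φ hφ
    rw [map_mul, Module.End.mul_apply]
    exact ha m _ (hb m φ hφ)
  | add a b ha hb =>
    intro m φ hφ
    rw [map_add, LinearMap.add_apply]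
    exact FF_add (ha m φ hφ) (hb m φ hφ)

lemma rep_raise_x {g : ℕ} (i : Fin g) {m : ℕ} {φ : Fock g} (hφ : FF g m φ) :
    FF g (m + 1) (rep (x g i) φ) := by rw [rep_x]; exact FF_crea _ hφ

lemma rep_raise_x' {g : ℕ} (i : Fin g) {m : ℕ} {φ : Fock g} (hφ : FF g m φ) :
    FF g (m + 1) (rep (x' g i) φ) := by rw [rep_x']; exact FF_crea _ hφ

lemma rep_raise_y {g : ℕ} {m : ℕ} {φ : Fock g} (hφ : FF g m φ) :
    FF g (m + 2) (rep (y g) φ) := by rw [rep_y_apply]; exact FF_X_smul hφ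

lemma rep_raise_yxx {g : ℕ} (k : Fin g) {m : ℕ} {φ : Fock g} (hφ : FF g m φ) :
    FF g (m + 2) (rep (y g - x g k * x' g k) φ) := by
  rw [map_sub, LinearMap.sub_apply]
  refine FF_sub (rep_raise_y hφ) ?_
  rw [map_mul, Module.End.mul_apply]
  exact rep_raise_x k (rep_raise_x' k hφ)

lemma rep_raise_listx {g : ℕ} (I : List (Fin g)) {m : ℕ} {φ : Fock g} (hφ : FF g m φ) :
    FF g (m + I.length) (rep ((I.map (x g)).prod) φ) := by
  induction I generalizing m φ with
  | nil => simpa using hφ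
  | cons i I ih =>
    rw [List.map_cons, List.prod_cons, map_mul, Module.End.mul_apply]
    have := rep_raise_x i (ih hφ)
    refine FF_mono (by simp; omega) this

lemma rep_raise_listx' {g : ℕ} (J : List (Fin g)) {m : ℕ} {φ : Fock g} (hφ : FF g m φ) :
    FF g (m + J.length) (rep ((J.map (x' g)).prod) φ) := by
  induction J generalizing m φ with
  | nil => simpa using hφ
  | cons i J ih =>
    rw [List.map_cons, List.prod_cons, map_mul, Module.End.mul_apply]
    have := rep_raise_x' i (ih hφ)
    refine FF_mono (by simp; omega) this

lemma rep_raise_listK {g : ℕ} (K : List (Fin g)) {m : ℕ} {φ : Fock g} (hφ : FF g m φ) :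
    FF g (m + 2 * K.length) (rep ((K.map (fun k => y g - x g k * x' g k)).prod) φ) := by
  induction K generalizing m φ with
  | nil => simpa using hφ
  | cons k K ih =>
    rw [List.map_cons, List.prod_cons, map_mul, Module.End.mul_apply]
    have := rep_raise_yxx k (ih hφ)
    refine FF_mono (by simp; omega) this

lemma rep_raise_ypow {g : ℕ} (q : ℕ) {m : ℕ} {φ : Fock g} (hφ : FF g m φ) :
    FF g (m + 2 * q) (rep ((y g) ^ q) φ) := by
  induction q generalizing m φ with
  | zero => simpa using hφ
  | succ q ih =>
    rw [pow_succ, map_mul, Module.End.mul_apply]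
    have := ih (rep_raise_y hφ)
    refine FF_mono (by omega) this

lemma rep_raise_macRel {g : ℕ} (I J K : List (Fin g)) (q : ℕ) {m : ℕ} {φ : Fock g}
    (hφ : FF g m φ) :
    FF g (m + (I.length + J.length + 2 * K.length + q)) (rep (macRel g I J K q) φ) := by
  rw [macRel, map_mul, Module.End.mul_apply, map_mul, Module.End.mul_apply, map_mul,
    Module.End.mul_apply]
  have h1 := rep_raise_ypow q hφ
  have h2 := rep_raise_listK K h1
  have h3 := rep_raise_listx' J h2
  have h4 := rep_raise_listx I h3
  refine FF_mono (by omega) h4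

/-- Membership in `IMac` forces the image of the vacuum to lie deep in the filtration. -/
lemma IMac_rep {g n : ℕ} {z : E g} (hz : z ∈ IMac g n) :
    ∀ m : ℕ, ∀ φ : Fock g, FF g m φ → FF g (m + (n + 1)) (rep z φ) := by
  let Carrier : Set (E g) :=
    {z | ∀ m : ℕ, ∀ φ : Fock g, FF g m φ → FF g (m + (n + 1)) (rep z φ)}
  have h0 : (0 : E g) ∈ Carrier := by
    intro m φ _
    rw [map_zero]
    exact fun S q _ => by simp
  have hadd : ∀ {a b : E g}, a ∈ Carrier → b ∈ Carrier → a + b ∈ Carrier := by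
    intro a b ha hb m φ hφ
    rw [map_add, LinearMap.add_apply]
    exact FF_add (ha m φ hφ) (hb m φ hφ)
  have hneg : ∀ {a : E g}, a ∈ Carrier → -a ∈ Carrier := by
    intro a ha m φ hφ
    rw [map_neg, LinearMap.neg_apply]
    exact FF_neg (ha m φ hφ)
  have hleft : ∀ {u a : E g}, a ∈ Carrier → u * a ∈ Carrier := by
    intro u a ha m φ hφ
    rw [map_mul, Module.End.mul_apply]
    exact rep_preserves u _ _ (ha m φ hφ)
  have hright : ∀ {a u : E g}, a ∈ Carrier → a * u ∈ Carrier := by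
    intro a u ha m φ hφ
    rw [map_mul, Module.End.mul_apply]
    exact ha m _ (rep_preserves u m φ hφ)
  have := TwoSidedIdeal.mem_span_iff.mp hz
    (TwoSidedIdeal.mk' Carrier h0 hadd hneg hleft hright) ?_
  · rwa [TwoSidedIdeal.mem_mk'] at this
  · rintro w ⟨I, J, K, q, -, hw, rfl⟩
    rw [SetLike.mem_coe, TwoSidedIdeal.mem_mk']
    intro m φ hφ
    have := rep_raise_macRel I J K q hφ
    refine FF_mono (by omega) this

lemma crea_single {g : ℕ} (i : Jg g) (S : Finset (Jg g)) (hi : i ∉ S) (r : Polynomial ℤ) :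
    crea i (Finsupp.single S r) = ((-1 : ℤ) ^ (cnt i S)) • Finsupp.single (insert i S) r := by
  refine Finsupp.ext fun T => ?_
  rw [crea_apply, Finsupp.smul_apply]
  by_cases h : i ∈ T
  · by_cases hT : T = insert i S
    · subst hT
      rw [if_pos h, Finset.erase_insert hi, Finsupp.single_eq_same, Finsupp.single_eq_same]
    · have hne1 : S ≠ T.erase i := fun hc => hT (by rw [hc, Finset.insert_erase h])
      have hne2 : insert i S ≠ T := fun hc => hT hc.symm
      rw [if_pos h, Finsupp.single_eq_of_ne' hne1, Finsupp.single_eq_of_ne' hne2,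
        smul_zero, smul_zero]
  · have hne : insert i S ≠ T :=
      fun hc => h (by rw [← hc]; exact Finset.mem_insert_self i S)
    rw [if_neg h, Finsupp.single_eq_of_ne' hne, smul_zero]

lemma prod_crea_single {g : ℕ} (L : List (Jg g)) (hL : L.Nodup) :
    ∀ S : Finset (Jg g), (∀ i ∈ L, i ∉ S) →
    ∃ ε : ℤ, (ε = 1 ∨ ε = -1) ∧ ∀ r : Polynomial ℤ,
      ((L.map crea).prod : Module.End (Polynomial ℤ) (Fock g)) (Finsupp.single S r)
        = ε • Finsupp.single (L.toFinset ∪ S) r := by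
  induction L with
  | nil =>
    intro S _
    exact ⟨1, Or.inl rfl, fun r => by simp⟩
  | cons i L ih =>
    intro S hdisj
    obtain ⟨hiL, hLnd⟩ := List.nodup_cons.mp hL
    obtain ⟨ε, hε, hprod⟩ := ih hLnd S (fun j hj => hdisj j (List.mem_cons_of_mem i hj))
    have hiUn : i ∉ L.toFinset ∪ S := by
      rw [Finset.mem_union]
      rintro (hc | hc)
      · exact hiL (List.mem_toFinset.mp hc)
      · exact hdisj i List.mem_cons_self hc
    refine ⟨ε * (-1 : ℤ) ^ (cnt i (L.toFinset ∪ S)), ?_, fun r => ?_⟩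
    · rcases Nat.even_or_odd (cnt i (L.toFinset ∪ S)) with hp | hp
      · rw [hp.neg_one_pow, mul_one]; exact hε
      · rw [hp.neg_one_pow]
        rcases hε with h | h <;> rw [h] <;> norm_num
    · rw [List.map_cons, List.prod_cons, Module.End.mul_apply, hprod r, map_zsmul,
        crea_single i _ hiUn, smul_smul, List.toFinset_cons, Finset.insert_union]

lemma rep_ypow_apply {g : ℕ} (q : ℕ) (φ : Fock g) :
    rep ((y g) ^ q) φ = ((X : Polynomial ℤ) ^ q) • φ := by
  rw [y, ← map_pow, AlgHom.commutes, Module.algebraMap_end_apply]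

def sAB {g : ℕ} (A B : Finset (Fin g)) : Finset (Jg g) :=
  A.image Sum.inl ∪ B.image Sum.inr

lemma card_sAB {g : ℕ} (A B : Finset (Fin g)) : (sAB A B).card = A.card + B.card := by
  rw [sAB, Finset.card_union_of_disjoint, Finset.card_image_of_injective _ Sum.inl_injective,
    Finset.card_image_of_injective _ Sum.inr_injective]
  rw [Finset.disjoint_left]
  rintro a ha hb
  obtain ⟨u, -, rfl⟩ := Finset.mem_image.mp ha
  obtain ⟨w, -, h⟩ := Finset.mem_image.mp hb
  exact Sum.inl_ne_inr h.symm

lemma list_toFinset_map {α β : Type*} [DecidableEq α] [DecidableEq β] (f : α → β)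
    (l : List α) : (l.map f).toFinset = l.toFinset.image f := by
  ext b; simp

lemma rep_emonomial {g : ℕ} (A B : Finset (Fin g)) :
    ∃ ε : ℤ, (ε = 1 ∨ ε = -1) ∧ ∀ q : ℕ,
      rep (emonomial g A B q) (Finsupp.single (∅ : Finset (Jg g)) 1)
        = ε • Finsupp.single (sAB A B) ((X : Polynomial ℤ) ^ q) := by
  have hBnd : ((B.sort (· ≤ ·)).map (Sum.inr : Fin g → Jg g)).Nodup :=
    (Finset.sort_nodup _ _).map Sum.inr_injective
  have hAnd : ((A.sort (· ≤ ·)).map (Sum.inl : Fin g → Jg g)).Nodup :=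
    (Finset.sort_nodup _ _).map Sum.inl_injective
  obtain ⟨εB, hεB, hB⟩ := prod_crea_single _ hBnd ∅ (fun i _ => Finset.notMem_empty i)
  have hdisjA : ∀ i ∈ (A.sort (· ≤ ·)).map (Sum.inl : Fin g → Jg g), i ∉ B.image Sum.inr := by
    intro i hi hc
    obtain ⟨a, -, rfl⟩ := List.mem_map.mp hi
    obtain ⟨b, -, h⟩ := Finset.mem_image.mp hc
    exact Sum.inl_ne_inr h.symm
  obtain ⟨εA, hεA, hA⟩ := prod_crea_single _ hAnd (B.image Sum.inr) hdisjA
  refine ⟨εA * εB, ?_, fun q => ?_⟩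
  · rcases hεA with h | h <;> rcases hεB with h' | h' <;> rw [h, h'] <;> norm_num
  · have hrepB : rep (((B.sort (· ≤ ·)).map (x' g)).prod)
        = (((B.sort (· ≤ ·)).map (Sum.inr : Fin g → Jg g)).map crea).prod := by
      rw [map_list_prod, List.map_map, List.map_map]
      congr 1
      exact List.map_congr_left fun a _ => rep_x' a
    have hrepA : rep (((A.sort (· ≤ ·)).map (x g)).prod)
        = (((A.sort (· ≤ ·)).map (Sum.inl : Fin g → Jg g)).map crea).prod := by
      rw [map_list_prod, List.map_map, List.map_map]
      congr 1
      exact List.map_congr_left fun a _ => rep_x a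
    rw [emonomial, map_mul, Module.End.mul_apply, map_mul, Module.End.mul_apply,
      rep_ypow_apply, Finsupp.smul_single, smul_eq_mul, mul_one, hrepB, hB,
      list_toFinset_map, Finset.sort_toFinset, Finset.union_empty, hrepA, map_zsmul,
      hA, smul_smul, list_toFinset_map, Finset.sort_toFinset, mul_comm εB εA]
    rfl

def monoSign {g : ℕ} (A B : Finset (Fin g)) : ℤ := (rep_emonomial A B).choose

lemma monoSign_mul_self {g : ℕ} (A B : Finset (Fin g)) : monoSign A B * monoSign A B = 1 := by
  rcases (rep_emonomial A B).choose_spec.1 with h | h <;> rw [monoSign, h] <;> norm_num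

lemma rep_emonomial_eq {g : ℕ} (A B : Finset (Fin g)) (q : ℕ) :
    rep (emonomial g A B q) (Finsupp.single (∅ : Finset (Jg g)) 1)
      = monoSign A B • Finsupp.single (sAB A B) ((X : Polynomial ℤ) ^ q) :=
  (rep_emonomial A B).choose_spec.2 q

def dA {g : ℕ} (S : Finset (Jg g)) : Finset (Fin g) :=
  S.preimage Sum.inl (Sum.inl_injective.injOn)
def dB {g : ℕ} (S : Finset (Jg g)) : Finset (Fin g) :=
  S.preimage Sum.inr (Sum.inr_injective.injOn)

lemma dA_sAB {g : ℕ} (A B : Finset (Fin g)) : dA (sAB A B) = A := by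
  ext a
  simp [dA, sAB]

lemma dB_sAB {g : ℕ} (A B : Finset (Fin g)) : dB (sAB A B) = B := by
  ext a
  simp [dB, sAB]

/-- The left inverse of vacuum evaluation on the span of monomials. -/
def LL {g : ℕ} : Fock g →+ E g :=
  Finsupp.liftAddHom (fun S =>
    { toFun := fun p => monoSign (dA S) (dB S) •
        (emonomial g (dA S) (dB S) 0 * algebraMap (Polynomial ℤ) (E g) p)
      map_zero' := by simp
      map_add' := fun a b => by simp [map_add, mul_add, smul_add] })

lemma LL_single {g : ℕ} (S : Finset (Jg g)) (p : Polynomial ℤ) :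
    LL (Finsupp.single S p) = monoSign (dA S) (dB S) •
      (emonomial g (dA S) (dB S) 0 * algebraMap (Polynomial ℤ) (E g) p) :=
  Finsupp.liftAddHom_apply_single _ _ _

lemma emonomial_q (g : ℕ) (A B : Finset (Fin g)) (q : ℕ) :
    emonomial g A B q = emonomial g A B 0 * algebraMap (Polynomial ℤ) (E g) (X ^ q) := by
  rw [emonomial, emonomial, pow_zero, mul_one, y, ← map_pow]

lemma LL_rep_mono {g : ℕ} (A B : Finset (Fin g)) (q : ℕ) :
    LL (rep (emonomial g A B q) (Finsupp.single (∅ : Finset (Jg g)) 1)) = emonomial g A B q := by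
  rw [rep_emonomial_eq, map_zsmul, LL_single, dA_sAB, dB_sAB, smul_smul, monoSign_mul_self,
    one_smul, ← emonomial_q]

lemma LL_rep_Ecomp {g s : ℕ} {z : E g} (hz : z ∈ Ecomp g s) :
    LL (rep z (Finsupp.single (∅ : Finset (Jg g)) 1)) = z := by
  refine Submodule.span_induction
    (p := fun w _ => LL (rep w (Finsupp.single (∅ : Finset (Jg g)) 1)) = w)
    ?_ ?_ ?_ ?_ hz
  · rintro w ⟨A, B, q, -, rfl⟩
    exact LL_rep_mono A B q
  · show LL (rep (0 : E g) (Finsupp.single (∅ : Finset (Jg g)) 1)) = 0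
    rw [map_zero]
    simp
  · intro a b _ _ ha hb
    rw [map_add, LinearMap.add_apply, map_add, ha, hb]
  · intro c w _ hw
    rw [map_zsmul rep, LinearMap.smul_apply, map_zsmul LL, hw]

lemma conc {g s : ℕ} {z : E g} (hz : z ∈ Ecomp g s) :
    ∀ S : Finset (Jg g), ∀ q : ℕ, S.card + 2 * q ≠ s →
      ((rep z (Finsupp.single (∅ : Finset (Jg g)) 1)) S).coeff q = 0 := by
  refine Submodule.span_induction
    (p := fun w _ => ∀ S : Finset (Jg g), ∀ q : ℕ, S.card + 2 * q ≠ s →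
      ((rep w (Finsupp.single (∅ : Finset (Jg g)) 1)) S).coeff q = 0)
    ?_ ?_ ?_ ?_ hz
  · rintro w ⟨A, B, q0, hdeg, rfl⟩ S q hq
    rw [rep_emonomial_eq, Finsupp.smul_apply]
    by_cases hS : sAB A B = S
    · have hne : q0 ≠ q := by
        intro h
        apply hq
        have hc := card_sAB A B
        rw [← hS, hc]
        omega
      rw [← hS, Finsupp.single_eq_same, Polynomial.coeff_smul, Polynomial.coeff_X_pow,
        if_neg (Ne.symm hne), smul_zero]
    · rw [Finsupp.single_eq_of_ne' hS, smul_zero, Polynomial.coeff_zero]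
  · intro S q _
    show (((rep (0 : E g)) (Finsupp.single (∅ : Finset (Jg g)) 1)) S).coeff q = 0
    rw [map_zero]
    simp
  · intro a b _ _ ha hb S q hq
    rw [map_add, LinearMap.add_apply, Finsupp.add_apply, Polynomial.coeff_add,
      ha S q hq, hb S q hq, add_zero]
  · intro c w _ hw S q hq
    rw [map_zsmul rep, LinearMap.smul_apply, Finsupp.smul_apply, Polynomial.coeff_smul,
      hw S q hq, smul_zero]

lemma key {g n s : ℕ} (hs : s ≤ n) {z : E g} (hz : z ∈ Ecomp g s) (m : ℤ) (hm : m ≠ 0)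
    (hmz : m • z ∈ IMac g n) : z = 0 := by
  have hvac : FF g 0 (Finsupp.single (∅ : Finset (Jg g)) (1 : Polynomial ℤ)) :=
    fun S q hq => absurd hq (by omega)
  have hF := IMac_rep hmz 0 _ hvac
  have hres : rep z (Finsupp.single (∅ : Finset (Jg g)) 1) = 0 := by
    refine Finsupp.ext fun S => Polynomial.ext fun q => ?_
    rw [Finsupp.coe_zero, Pi.zero_apply, Polynomial.coeff_zero]
    by_cases hd : S.card + 2 * q = s
    · have h0 := hF S q (by omega)
      rw [map_zsmul rep, LinearMap.smul_apply, Finsupp.smul_apply, Polynomial.coeff_smul,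
        smul_eq_mul] at h0
      exact (mul_eq_zero.mp h0).resolve_left hm
    · exact conc hz S q hd
  have h := LL_rep_Ecomp hz
  rw [hres, map_zero] at h
  exact h.symm


/-- Every homogeneous element of `I_Mac` of degree `s ≤ n` is zero; in particular the
quotient `E/I_Mac` is torsion-free in degrees `0 ≤ s ≤ n`. -/
theorem IMac_trivial_in_low_degrees (g n s : ℕ) (hg : 1 ≤ g) (hn : 2 ≤ n) (hs : s ≤ n) :
    (∀ z : E g, z ∈ Ecomp g s → z ∈ IMac g n → z = 0) ∧
    (∀ z : E g, z ∈ Ecomp g s → ∀ m : ℤ, m ≠ 0 → m • z ∈ IMac g n → z ∈ IMac g n) := by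
  constructor
  · intro z hz hIz
    exact key hs hz 1 one_ne_zero (by rwa [one_smul])
  · intro z hz m hm hmz
    rw [key hs hz m hm hmz]
    exact TwoSidedIdeal.zero_mem _
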